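/- Let V be a finite vertex type and F a finite face type, with each face f assigned an edge set E_f such that every vertex incident to an edge of E_f is incident to exactly two edges of E_f, and assume the two-face condition and the single-shared-edge condition. Then the number of flags (i.e., vertices of the Euler-transformed graph Ĝ) equals 2|E|, and the number of edges of Ĝ equals 4|E|, where E = ⋃_f E_f. -/

import Mathlib

open scoped Classical

noncomputable section

/-- A *flag* of a combinatorial polygonal complex: a pair `(v, f)` of a vertex and a face
such that `v` is incident to some edge of the edge set `E f` of the face `f`. -/
abbrev EulerFlag {V F : Type*} (E : F → Finset (Sym2 V)) : Type _ :=
  {p : V × F // ∃ e ∈ E p.2, p.1 ∈ e}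

/-- The adjacency relation of the Euler-transformed graph on flags:
`(u, f)` and `(v, f)` are related when `{u, v} ∈ E f`, and `(v, f)` and `(v, f')` are related
when `f ≠ f'` and some edge `e ∈ E f ∩ E f'` contains `v`. -/
def eulerRel {V F : Type*} (E : F → Finset (Sym2 V)) (p q : EulerFlag E) : Prop :=
  (p.val.2 = q.val.2 ∧ p.val.1 ≠ q.val.1 ∧ s(p.val.1, q.val.1) ∈ E p.val.2) ∨
    (p.val.1 = q.val.1 ∧ p.val.2 ≠ q.val.2 ∧
      ∃ e, e ∈ E p.val.2 ∧ e ∈ E q.val.2 ∧ p.val.1 ∈ e)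

/-- The Euler-transformed graph `Ĝ` on flags. -/
def eulerGraph {V F : Type*} (E : F → Finset (Sym2 V)) : SimpleGraph (EulerFlag E) :=
  SimpleGraph.fromRel (eulerRel E)

/-! ### Auxiliary lemmas -/

lemma sym2_mem_card' {V : Type*} [Fintype V] (e : Sym2 V) (h : ¬ e.IsDiag) :
    (Finset.univ.filter (fun v => v ∈ e)).card = 2 := by
  induction e using Sym2.ind with
  | _ a b =>
    have hab : a ≠ b := by simpa [Sym2.isDiag_iff_proj_eq] using h
    have hs : Finset.univ.filter (fun v => v ∈ s(a,b)) = {a, b} := by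
      ext v; simp [Sym2.mem_iff]
    rw [hs, Finset.card_insert_of_notMem (by simp [hab]), Finset.card_singleton]

lemma card_two_other' {α : Type*} {s : Finset α} (h : s.card = 2) {a : α} (ha : a ∈ s) :
    ∃ b, b ≠ a ∧ b ∈ s ∧ s = {a, b} := by
  classical
  obtain ⟨x, y, hxy, rfl⟩ := Finset.card_eq_two.mp h
  rcases Finset.mem_insert.mp ha with rfl | h'
  · exact ⟨y, hxy.symm, by simp, rfl⟩
  · rw [Finset.mem_singleton] at h'; subst h'
    exact ⟨x, hxy, by simp, by rw [Finset.pair_comm]⟩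

lemma eulerRel_symm' {V F : Type*} (E : F → Finset (Sym2 V)) (p q : EulerFlag E)
    (h : eulerRel E p q) : eulerRel E q p := by
  rcases h with ⟨h1, h2, h3⟩ | ⟨h1, h2, h3, h4, h5, h6⟩
  · left
    refine ⟨h1.symm, h2.symm, ?_⟩
    rw [Sym2.eq_swap, ← h1]; exact h3
  · right
    exact ⟨h1.symm, h2.symm, h3, h5, h4, h1 ▸ h6⟩

lemma euler_adj' {V F : Type*} (E : F → Finset (Sym2 V)) (p q : EulerFlag E) :
    (eulerGraph E).Adj p q ↔ eulerRel E p q := by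
  constructor
  · rintro ⟨hne, h | h⟩
    · exact h
    · exact eulerRel_symm' E q p h
  · intro h
    refine ⟨?_, Or.inl h⟩
    rcases h with ⟨_, h2, _⟩ | ⟨_, h2, _⟩ <;>
      exact fun hpq => h2 (by rw [hpq])

lemma euler_flag_count' {V F : Type*} [Fintype V] [Fintype F] (E : F → Finset (Sym2 V))
    (hnd : ∀ f, ∀ e ∈ E f, ¬ e.IsDiag)
    (hloc : ∀ f v, (∃ e ∈ E f, v ∈ e) → ((E f).filter (fun e => v ∈ e)).card = 2)
    (htwo : ∀ e : Sym2 V, (∃ f, e ∈ E f) →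
      (Finset.univ.filter (fun f => e ∈ E f)).card = 2) :
    Fintype.card (EulerFlag E) = 2 * (Finset.univ.biUnion E).card := by
  have hface : ∀ f : F,
      (Finset.univ.filter (fun v => ∃ e ∈ E f, v ∈ e)).card = (E f).card := by
    intro f
    have key : ∑ v : V, ((E f).filter (fun e => v ∈ e)).card = 2 * (E f).card := by
      have hdc : ∑ v : V, ((E f).filter (fun e => v ∈ e)).card
          = ∑ e ∈ E f, (Finset.univ.filter (fun v => v ∈ e)).card := by
        simp_rw [Finset.card_filter]; exact Finset.sum_comm
      rw [hdc, Finset.sum_congr rfl (fun e he => sym2_mem_card' e (hnd f e he))]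
      simp [mul_comm]
    have key2 : ∑ v : V, ((E f).filter (fun e => v ∈ e)).card =
        2 * (Finset.univ.filter (fun v => ∃ e ∈ E f, v ∈ e)).card := by
      rw [← Finset.sum_filter_add_sum_filter_not Finset.univ
        (fun v => ∃ e ∈ E f, v ∈ e)]
      have h1 : ∑ v ∈ Finset.univ.filter (fun v => ∃ e ∈ E f, v ∈ e),
          ((E f).filter (fun e => v ∈ e)).card =
          2 * (Finset.univ.filter (fun v => ∃ e ∈ E f, v ∈ e)).card := by
        rw [Finset.sum_congr rfl (fun v hv => hloc f v (Finset.mem_filter.mp hv).2)]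
        simp [mul_comm]
      have h2 : ∑ v ∈ Finset.univ.filter (fun v => ¬ ∃ e ∈ E f, v ∈ e),
          ((E f).filter (fun e => v ∈ e)).card = 0 := by
        apply Finset.sum_eq_zero
        intro v hv
        have := (Finset.mem_filter.mp hv).2
        rw [Finset.card_eq_zero]
        ext e; simp only [Finset.mem_filter, Finset.notMem_empty, iff_false]
        rintro ⟨he, hve⟩
        exact this ⟨e, he, hve⟩
      omega
    omega
  rw [Fintype.card_subtype]
  have hsplit : (Finset.univ.filter (fun p : V × F => ∃ e ∈ E p.2, p.1 ∈ e)).card =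
      ∑ f : F, (Finset.univ.filter (fun v => ∃ e ∈ E f, v ∈ e)).card := by
    rw [Finset.card_eq_sum_card_fiberwise
      (f := fun p : V × F => p.2) (t := Finset.univ) (fun p _ => Finset.mem_univ _)]
    apply Finset.sum_congr rfl
    intro f _
    apply Finset.card_bij (fun p _ => p.1)
    · rintro ⟨v, g⟩ hp
      simp only [Finset.mem_filter, Finset.mem_univ, true_and] at hp ⊢
      obtain ⟨h1, h2⟩ := hp
      subst h2; exact h1
    · rintro ⟨v, g⟩ hp ⟨v', g'⟩ hp' h
      simp only [Finset.mem_filter] at hp hp'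
      simp only at h
      subst h; rw [hp.2, hp'.2]
    · intro v hv
      simp only [Finset.mem_filter, Finset.mem_univ, true_and] at hv
      exact ⟨(v, f), by simp [hv], rfl⟩
  rw [hsplit, Finset.sum_congr rfl (fun f _ => hface f)]
  have hsum2 : ∑ f : F, (E f).card =
      ∑ e ∈ Finset.univ.biUnion E, (Finset.univ.filter (fun f => e ∈ E f)).card := by
    have hre : ∀ f : F,
        (E f).card = ((Finset.univ.biUnion E).filter (fun e => e ∈ E f)).card := by
      intro f
      congr 1
      ext e
      simp only [Finset.mem_filter, Finset.mem_biUnion, Finset.mem_univ, true_and]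
      exact ⟨fun he => ⟨⟨f, he⟩, he⟩, fun h => h.2⟩
    rw [Finset.sum_congr rfl (fun f _ => hre f)]
    simp_rw [Finset.card_filter]; exact Finset.sum_comm
  rw [hsum2, Finset.sum_congr rfl (fun e he => htwo e (by
    simpa using Finset.mem_biUnion.mp he))]
  simp [mul_comm]

lemma euler_degree' {V F : Type*} [Fintype V] [Fintype F] (E : F → Finset (Sym2 V))
    (hnd : ∀ f, ∀ e ∈ E f, ¬ e.IsDiag)
    (hloc : ∀ f v, (∃ e ∈ E f, v ∈ e) → ((E f).filter (fun e => v ∈ e)).card = 2)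
    (htwo : ∀ e : Sym2 V, (∃ f, e ∈ E f) →
      (Finset.univ.filter (fun f => e ∈ E f)).card = 2)
    (hshare : ∀ f f' : F, f ≠ f' → ((E f) ∩ (E f')).card ≤ 1)
    (p : EulerFlag E) : (eulerGraph E).degree p = 4 := by
  obtain ⟨⟨v, f⟩, hp⟩ := p
  obtain ⟨e1, e2, he12, hE⟩ := Finset.card_eq_two.mp (hloc f v hp)
  have he1m : e1 ∈ (E f).filter (fun e => v ∈ e) := by rw [hE]; simp
  have he2m : e2 ∈ (E f).filter (fun e => v ∈ e) := by rw [hE]; simp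
  obtain ⟨he1f, hve1⟩ := Finset.mem_filter.mp he1m
  obtain ⟨he2f, hve2⟩ := Finset.mem_filter.mp he2m
  obtain ⟨u1, hu1⟩ := Sym2.mem_iff_exists.mp hve1
  obtain ⟨u2, hu2⟩ := Sym2.mem_iff_exists.mp hve2
  have hu1v : v ≠ u1 := by
    intro h
    apply hnd f e1 he1f
    rw [hu1, ← h]
    exact Sym2.isDiag_iff_proj_eq.mpr rfl
  have hu2v : v ≠ u2 := by
    intro h
    apply hnd f e2 he2f
    rw [hu2, ← h]
    exact Sym2.isDiag_iff_proj_eq.mpr rfl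
  have huu : u1 ≠ u2 := fun h => he12 (by rw [hu1, hu2, h])
  obtain ⟨f1, hf1ne, hf1mem, hfaces1⟩ :=
    card_two_other' (htwo e1 ⟨f, he1f⟩) (by simp [he1f] : f ∈ _)
  obtain ⟨f2, hf2ne, hf2mem, hfaces2⟩ :=
    card_two_other' (htwo e2 ⟨f, he2f⟩) (by simp [he2f] : f ∈ _)
  have he1f1 : e1 ∈ E f1 := (Finset.mem_filter.mp hf1mem).2
  have he2f2 : e2 ∈ E f2 := (Finset.mem_filter.mp hf2mem).2
  have hff : f1 ≠ f2 := by
    intro h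
    have hsub : ({e1, e2} : Finset (Sym2 V)) ⊆ E f ∩ E f1 := by
      intro e he
      rcases Finset.mem_insert.mp he with rfl | he
      · exact Finset.mem_inter.mpr ⟨he1f, he1f1⟩
      · rw [Finset.mem_singleton] at he; subst he
        exact Finset.mem_inter.mpr ⟨he2f, h ▸ he2f2⟩
    have h2 : ({e1, e2} : Finset (Sym2 V)).card = 2 :=
      Finset.card_eq_two.mpr ⟨e1, e2, he12, rfl⟩
    have h3 := Finset.card_le_card hsub
    have h4 := hshare f f1 (Ne.symm hf1ne)
    omega
  have hq1 : ∃ e ∈ E f, u1 ∈ e := ⟨e1, he1f, by rw [hu1]; exact Sym2.mem_mk_right _ _⟩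
  have hq2 : ∃ e ∈ E f, u2 ∈ e := ⟨e2, he2f, by rw [hu2]; exact Sym2.mem_mk_right _ _⟩
  have hq3 : ∃ e ∈ E f1, v ∈ e := ⟨e1, he1f1, hve1⟩
  have hq4 : ∃ e ∈ E f2, v ∈ e := ⟨e2, he2f2, hve2⟩
  have hnb : (eulerGraph E).neighborFinset ⟨(v, f), hp⟩ =
      {⟨(u1, f), hq1⟩, ⟨(u2, f), hq2⟩, ⟨(v, f1), hq3⟩, ⟨(v, f2), hq4⟩} := by
    ext q
    rw [SimpleGraph.mem_neighborFinset, euler_adj']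
    simp only [Finset.mem_insert, Finset.mem_singleton]
    constructor
    · rintro (⟨h1, h2, h3⟩ | ⟨h1, h2, e, heEf, heEg, hve⟩)
      · have hm : s(v, q.val.1) ∈ (E f).filter (fun e => v ∈ e) :=
          Finset.mem_filter.mpr ⟨h3, Sym2.mem_mk_left _ _⟩
        rw [hE] at hm
        rcases Finset.mem_insert.mp hm with h | h
        · left
          have ha : q.val.1 = u1 := Sym2.congr_right.mp (h.trans hu1)
          exact Subtype.ext (Prod.ext_iff.mpr ⟨ha, h1.symm⟩)
        · rw [Finset.mem_singleton] at h
          right; left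
          have ha : q.val.1 = u2 := Sym2.congr_right.mp (h.trans hu2)
          exact Subtype.ext (Prod.ext_iff.mpr ⟨ha, h1.symm⟩)
      · have hm : e ∈ (E f).filter (fun e => v ∈ e) := Finset.mem_filter.mpr ⟨heEf, hve⟩
        rw [hE] at hm
        rcases Finset.mem_insert.mp hm with rfl | h
        · right; right; left
          have hg : q.val.2 ∈ Finset.univ.filter (fun g => e ∈ E g) :=
            Finset.mem_filter.mpr ⟨Finset.mem_univ _, heEg⟩
          rw [hfaces1] at hg
          rcases Finset.mem_insert.mp hg with h | h
          · exact absurd h.symm h2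
          · rw [Finset.mem_singleton] at h
            exact Subtype.ext (Prod.ext_iff.mpr ⟨h1.symm, h⟩)
        · rw [Finset.mem_singleton] at h
          right; right; right
          have hg : q.val.2 ∈ Finset.univ.filter (fun g => e2 ∈ E g) :=
            Finset.mem_filter.mpr ⟨Finset.mem_univ _, h ▸ heEg⟩
          rw [hfaces2] at hg
          rcases Finset.mem_insert.mp hg with h | h
          · exact absurd h.symm h2
          · rw [Finset.mem_singleton] at h
            exact Subtype.ext (Prod.ext_iff.mpr ⟨h1.symm, h⟩)
    · rintro (rfl | rfl | rfl | rfl)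
      · exact Or.inl ⟨rfl, hu1v, hu1 ▸ he1f⟩
      · exact Or.inl ⟨rfl, hu2v, hu2 ▸ he2f⟩
      · exact Or.inr ⟨rfl, Ne.symm hf1ne, e1, he1f, he1f1, hve1⟩
      · exact Or.inr ⟨rfl, Ne.symm hf2ne, e2, he2f, he2f2, hve2⟩
  show ((eulerGraph E).neighborFinset ⟨(v, f), hp⟩).card = 4
  rw [hnb]
  rw [Finset.card_insert_of_notMem (by
      simp only [Finset.mem_insert, Finset.mem_singleton, Subtype.mk.injEq, Prod.mk.injEq]
      push_neg
      exact ⟨fun h => absurd h huu, fun h => absurd h.symm hu1v, fun h => absurd h.symm hu1v⟩),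
    Finset.card_insert_of_notMem (by
      simp only [Finset.mem_insert, Finset.mem_singleton, Subtype.mk.injEq, Prod.mk.injEq]
      push_neg
      exact ⟨fun h => absurd h.symm hu2v, fun h => absurd h.symm hu2v⟩),
    Finset.card_insert_of_notMem (by
      simp only [Finset.mem_singleton, Subtype.mk.injEq, Prod.mk.injEq]
      push_neg
      exact fun _ => hff),
    Finset.card_singleton]

/-- Under the two-face and single-shared-edge conditions, the number of flags equals `2|E|`
and the number of edges of the Euler-transformed graph equals `4|E|`. -/
theorem euler_transform_counts {V F : Type*} [Fintype V] [Fintype F]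
    (E : F → Finset (Sym2 V))
    (hnd : ∀ f, ∀ e ∈ E f, ¬ e.IsDiag)
    (hloc : ∀ f v, (∃ e ∈ E f, v ∈ e) → ((E f).filter (fun e => v ∈ e)).card = 2)
    (htwo : ∀ e : Sym2 V, (∃ f, e ∈ E f) →
      (Finset.univ.filter (fun f => e ∈ E f)).card = 2)
    (hshare : ∀ f f' : F, f ≠ f' → ((E f) ∩ (E f')).card ≤ 1) :
    Fintype.card (EulerFlag E) = 2 * (Finset.univ.biUnion E).card ∧
    (eulerGraph E).edgeFinset.card = 4 * (Finset.univ.biUnion E).card := by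
  have hflag := euler_flag_count' E hnd hloc htwo
  refine ⟨hflag, ?_⟩
  have hsum := SimpleGraph.sum_degrees_eq_twice_card_edges (eulerGraph E)
  rw [Finset.sum_congr rfl (fun p _ => euler_degree' E hnd hloc htwo hshare p),
    Finset.sum_const, smul_eq_mul, Finset.card_univ] at hsum
  omega
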